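/- Let K be a field, G a finite group, and C a nonzero right ideal of the group algebra KG. Then d(C) \cdot dim_K(C) \geq |G|, where d(C) is the minimum Hamming weight of a nonzero element of C. -/

import Mathlib

open MonoidAlgebra

attribute [local instance] Classical.propDecidable

/-- Coefficientwise (Schur) product on the group algebra. -/
noncomputable def schur {K G : Type*} [Semiring K] (f g : MonoidAlgebra K G) :
    MonoidAlgebra K G :=
  MonoidAlgebra.ofCoeff (Finsupp.zipWith (· * ·) (mul_zero 0) f.coeff g.coeff)

/-- `C` is a right ideal of the group algebra. -/
def IsRightIdeal {K G : Type*} [Field K] [Group G]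
    (C : Submodule K (MonoidAlgebra K G)) : Prop :=
  ∀ c ∈ C, ∀ v : MonoidAlgebra K G, c * v ∈ C

open Pointwise

/-- For a nonzero right ideal `C` of `KG`, `d(C) · dim C ≥ |G|`. -/
theorem stmt2 {K G : Type*} [Field K] [Group G] [Fintype G]
    (C : Submodule K (MonoidAlgebra K G)) (hI : IsRightIdeal C) (hC : C ≠ ⊥)
    (d : ℕ) (hd : IsLeast {w | ∃ c ∈ C, c ≠ 0 ∧ c.coeff.support.card = w} d) :
    Fintype.card G ≤ d * Module.finrank K ↥C := by
  classical
  obtain ⟨⟨c, hcC, hc0, hcard⟩, -⟩ := hd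
  haveI : Module.Finite K (MonoidAlgebra K G) :=
    Module.Finite.equiv ((Finsupp.linearEquivFunOnFinite K K G).symm.trans (MonoidAlgebra.coeffLinearEquiv K).symm)
  -- coordinate functionals on C
  let φ : G → Module.Dual K ↥C := fun g => (Finsupp.lapply g).comp ((MonoidAlgebra.coeffLinearEquiv K).toLinearMap.comp C.subtype)
  have hspan : Submodule.span K (Set.range φ) = ⊤ := by
    apply Submodule.span_eq_top_of_ne_zero
    intro z hz
    have hz' : (z : MonoidAlgebra K G) ≠ 0 := fun h => hz (Subtype.ext h)
    obtain ⟨g, hg⟩ := Finsupp.support_nonempty_iff.mpr (mt MonoidAlgebra.coeff_eq_zero.mp hz')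
    exact ⟨φ g, ⟨g, rfl⟩, Finsupp.mem_support_iff.mp hg⟩
  obtain ⟨b, hbsub, hbspan, hbind⟩ := exists_linearIndependent K (Set.range φ)
  rw [hspan] at hbspan
  have hbfin : b.Finite := hbind.setFinite
  haveI := hbfin.fintype
  have hbcard : hbfin.toFinset.card = Module.finrank K ↥C := by
    have h1 : Module.finrank K (Submodule.span K b) = b.toFinset.card :=
      finrank_span_set_eq_card hbind
    rw [hbspan] at h1
    rw [Set.Finite.card_toFinset, ← Set.toFinset_card]
    rw [finrank_top] at h1
    rw [← h1, Subspace.dual_finrank_eq]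
  -- choose for each functional in b a group element
  have hchoice : ∀ x ∈ hbfin.toFinset, ∃ g : G, φ g = x := by
    intro x hx
    exact hbsub (hbfin.mem_toFinset.mp hx)
  choose gf hgf using hchoice
  let E : Finset G := hbfin.toFinset.attach.image (fun x => gf x.1 x.2)
  have hEcard : E.card ≤ Module.finrank K ↥C := by
    calc E.card ≤ hbfin.toFinset.attach.card := Finset.card_image_le
    _ = hbfin.toFinset.card := Finset.card_attach
    _ = _ := hbcard
  -- key: vanishing on E implies zero
  have hkey : ∀ z : ↥C, (∀ e ∈ E, (z : MonoidAlgebra K G).coeff e = 0) → z = 0 := by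
    intro z hzE
    rw [← Module.forall_dual_apply_eq_zero_iff K z]
    intro ψ
    have hψ : ψ ∈ Submodule.span K b := hbspan ▸ Submodule.mem_top
    induction hψ using Submodule.span_induction with
    | mem x hx =>
      have hxE : gf x (hbfin.mem_toFinset.mpr hx) ∈ E :=
        Finset.mem_image.mpr ⟨⟨x, hbfin.mem_toFinset.mpr hx⟩, Finset.mem_attach _ _, rfl⟩
      have := hgf x (hbfin.mem_toFinset.mpr hx)
      rw [← this]
      exact hzE _ hxE
    | zero => simp
    | add x y _ _ hx hy => simp [hx, hy]
    | smul a x _ hx => simp [hx]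
  -- covering argument
  set S : Finset G := c.coeff.support with hS
  have hSne : S.Nonempty := Finsupp.support_nonempty_iff.mpr (mt MonoidAlgebra.coeff_eq_zero.mp hc0)
  have hcover : (Finset.univ : Finset G) ⊆ (S.image (·⁻¹)) * E := by
    intro g _
    set cg : MonoidAlgebra K G := c * MonoidAlgebra.single g 1 with hcg
    have hcgC : cg ∈ C := hI c hcC _
    have hsupp : cg.coeff.support = S.map (mulRightEmbedding g) :=
      MonoidAlgebra.support_coeff_mul_single c 1 (fun y => by simp) g
    have hcg0 : cg ≠ 0 := by
      rw [Ne, ← MonoidAlgebra.coeff_eq_zero, ← Ne, ← Finsupp.support_nonempty_iff, hsupp]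
      exact hSne.map
    obtain ⟨e, heE, he0⟩ : ∃ e ∈ E, cg.coeff e ≠ 0 := by
      by_contra h
      push_neg at h
      exact hcg0 (congrArg Subtype.val (hkey ⟨cg, hcgC⟩ h))
    have heS : e ∈ cg.coeff.support := Finsupp.mem_support_iff.mpr he0
    rw [hsupp, Finset.mem_map] at heS
    obtain ⟨s, hsS, hse⟩ := heS
    rw [mulRightEmbedding_apply] at hse
    refine Finset.mem_mul.mpr ⟨s⁻¹, Finset.mem_image_of_mem _ hsS, e, heE, ?_⟩
    rw [← hse]; group
  calc Fintype.card G = (Finset.univ : Finset G).card := rfl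
    _ ≤ ((S.image (·⁻¹)) * E).card := Finset.card_le_card hcover
    _ ≤ (S.image (·⁻¹)).card * E.card := Finset.card_mul_le
    _ ≤ S.card * E.card := Nat.mul_le_mul_right _ Finset.card_image_le
    _ = d * E.card := by rw [hcard]
    _ ≤ d * Module.finrank K ↥C := Nat.mul_le_mul_left _ hEcard
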